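/- If M ∈ ℂ^{n×n} has rank 1, then the Toeplitz number of M is at most 3, i.e., M is a product of at most 3 Toeplitz matrices. -/

import Mathlib

def IsToeplitz {n : ℕ} (M : Matrix (Fin n) (Fin n) ℂ) : Prop :=
  ∀ (i j : Fin n) (hi : (i : ℕ) + 1 < n) (hj : (j : ℕ) + 1 < n),
    M i j = M ⟨i + 1, hi⟩ ⟨j + 1, hj⟩

noncomputable def ToepNum {n : ℕ} (M : Matrix (Fin n) (Fin n) ℂ) : ℕ :=
  sInf {s | ∃ L : List (Matrix (Fin n) (Fin n) ℂ),
    L.length = s ∧ (∀ T ∈ L, IsToeplitz T) ∧ L.prod = M}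

lemma exists_rank_one_decomp {n : ℕ} (M : Matrix (Fin n) (Fin n) ℂ)
    (hM : M.rank = 1) : ∃ u v : Fin n → ℂ, ∀ i j, M i j = u i * v j := by
  have h : Module.finrank ℂ (LinearMap.range M.mulVecLin) = 1 := hM
  rw [finrank_eq_one_iff'] at h
  obtain ⟨⟨w, hw⟩, _, hspan⟩ := h
  choose c hc using fun j =>
    hspan ⟨M.mulVec (Pi.single j 1), LinearMap.mem_range_self _ _⟩
  refine ⟨w, c, fun i j => ?_⟩
  have h1 := congrFun (congrArg Subtype.val (hc j)) i
  simp only [Submodule.coe_smul, Pi.smul_apply, smul_eq_mul] at h1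
  have h2 : M.mulVec (Pi.single j 1) i = M i j := by
    simp [Matrix.mulVec_single]
  rw [h2] at h1
  rw [← h1, mul_comm]

theorem rank_one_toepnum_le_three {n : ℕ} (M : Matrix (Fin n) (Fin n) ℂ)
    (hM : M.rank = 1) : ToepNum M ≤ 3 := by
  have hn : 0 < n := by
    by_contra h
    push_neg at h
    interval_cases n
    · have : M.rank ≤ 0 := by
        simpa using M.rank_le_card_width
      omega
  obtain ⟨u, v, huv⟩ := exists_rank_one_decomp M hM
  set i0 : Fin n := ⟨0, hn⟩ with hi0
  set ilast : Fin n := ⟨n - 1, by omega⟩ with hilast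
  set A : Matrix (Fin n) (Fin n) ℂ :=
    Matrix.of (fun i j => if (j : ℕ) ≤ i then u ⟨i - j, by omega⟩ else 0) with hA
  set E : Matrix (Fin n) (Fin n) ℂ := Matrix.single i0 ilast 1 with hE
  set B : Matrix (Fin n) (Fin n) ℂ :=
    Matrix.of (fun i j => if (j : ℕ) ≤ i then v ⟨n - 1 - ((i : ℕ) - j), by omega⟩ else 0)
    with hB
  have hTA : IsToeplitz A := by
    intro i j hi hj
    simp only [hA, Matrix.of_apply, Fin.val_mk]
    rcases le_or_gt (j : ℕ) (i : ℕ) with h | h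
    · rw [if_pos h, if_pos (by omega)]
      congr 1
      apply Fin.ext
      simp only [Fin.val_mk]
      omega
    · rw [if_neg (by omega), if_neg (by omega)]
  have hTE : IsToeplitz E := by
    intro i j hi hj
    simp only [hE]
    rw [Matrix.single_apply_of_ne, Matrix.single_apply_of_ne] <;>
      (rintro ⟨h1, h2⟩;
       have e1 := congrArg Fin.val h1;
       have e2 := congrArg Fin.val h2;
       simp only [hi0, hilast, Fin.val_mk] at e1 e2;
       omega)
  have hTB : IsToeplitz B := by
    intro i j hi hj
    simp only [hB, Matrix.of_apply, Fin.val_mk]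
    rcases le_or_gt (j : ℕ) (i : ℕ) with h | h
    · rw [if_pos h, if_pos (by omega)]
      congr 1
      apply Fin.ext
      simp only [Fin.val_mk]
      omega
    · rw [if_neg (by omega), if_neg (by omega)]
  have hprod : A * E * B = M := by
    ext i j
    have hAE : ∀ l : Fin n, (A * E) i l = if l = ilast then A i i0 else 0 := by
      intro l
      rcases eq_or_ne l ilast with rfl | hl
      · rw [if_pos rfl, hE, Matrix.mul_single_apply_same, mul_one]
      · rw [if_neg hl, hE, Matrix.mul_single_apply_of_ne (hbj := hl)]
    rw [Matrix.mul_apply]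
    rw [Finset.sum_eq_single ilast]
    · rw [hAE ilast, if_pos rfl]
      have hjn := j.isLt
      have h1 : A i i0 = u i := by
        simp only [hA, Matrix.of_apply, hi0, Fin.val_mk]
        rw [if_pos (Nat.zero_le _)]
        exact congrArg u (Fin.ext (by simp only [Fin.val_mk]; omega))
      have h2 : B ilast j = v j := by
        simp only [hB, Matrix.of_apply, hilast, Fin.val_mk]
        rw [if_pos (by omega)]
        congr 1
        apply Fin.ext
        simp only [Fin.val_mk]
        omega
      rw [h1, h2, huv]
    · intro b _ hb
      rw [hAE b, if_neg hb, zero_mul]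
    · intro h
      exact absurd (Finset.mem_univ _) h
  have hmem : 3 ∈ {s | ∃ L : List (Matrix (Fin n) (Fin n) ℂ),
      L.length = s ∧ (∀ T ∈ L, IsToeplitz T) ∧ L.prod = M} := by
    refine ⟨[A, E, B], rfl, ?_, ?_⟩
    · intro T hT
      simp only [List.mem_cons, List.not_mem_nil, or_false] at hT
      rcases hT with rfl | rfl | rfl
      · exact hTA
      · exact hTE
      · exact hTB
    · simp [List.prod_cons, ← mul_assoc, hprod]
  exact Nat.sInf_le hmem
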